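/- Let M be symmetric positive definite and A, B symmetric positive semidefinite real n×n matrices, τ > 0. Every eigenvalue λ of E_d = M⁻¹·blockdiag applied as [[0, τM⁻¹A],[−τM⁻¹B, 0]] (the 2n×2n matrix [[M,0],[0,M]]⁻¹[[0, τA],[−τB, 0]]) satisfies |λ| ≤ (τ/2)(‖M^{-1/2}AM^{-1/2}‖ + ‖M^{-1/2}BM^{-1/2}‖), where ‖·‖ is the spectral norm. -/

import Mathlib

open Matrix

section
open scoped ComplexOrder

/-- The positive semidefinite square root of a positive semidefinite matrix
(the definition `Matrix.PosSemidef.sqrt` of the older Mathlib, removed since). -/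
noncomputable def Matrix.PosSemidef.sqrt {n 𝕜 : Type*} [Fintype n] [DecidableEq n] [RCLike 𝕜]
    {A : Matrix n n 𝕜} (hA : A.PosSemidef) : Matrix n n 𝕜 :=
  hA.1.eigenvectorUnitary.1 * diagonal ((↑) ∘ (Real.sqrt ∘ hA.1.eigenvalues)) *
  (star hA.1.eigenvectorUnitary : Matrix n n 𝕜)

end

section Stmt10Aux

private lemma stmt10_sqrt_mul_self {m : Type*} [Fintype m] [DecidableEq m] {A : Matrix m m ℝ}
    (hA : A.PosSemidef) : hA.sqrt * hA.sqrt = A := by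
  set U := hA.1.eigenvectorUnitary with hUdef
  have hU : (star U : Matrix m m ℝ) * (U : Matrix m m ℝ) = 1 := Unitary.coe_star_mul_self U
  have hd : diagonal (((↑) : ℝ → ℝ) ∘ (Real.sqrt ∘ hA.1.eigenvalues)) *
      diagonal (((↑) : ℝ → ℝ) ∘ (Real.sqrt ∘ hA.1.eigenvalues)) =
      diagonal (RCLike.ofReal ∘ hA.1.eigenvalues : m → ℝ) := by
    rw [diagonal_mul_diagonal]; congr 1; funext i
    simp [Real.mul_self_sqrt (hA.eigenvalues_nonneg i)]
  conv_rhs => rw [hA.1.spectral_theorem, Unitary.conjStarAlgAut_apply]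
  simp only [Matrix.PosSemidef.sqrt]
  rw [← hd]
  simp only [Matrix.mul_assoc]
  rw [← Matrix.mul_assoc (star U : Matrix m m ℝ) (U : Matrix m m ℝ), hU, Matrix.one_mul]
  rfl

private lemma stmt10_clm_equiv {𝕜 : Type*} [RCLike 𝕜] {n : ℕ} (C : Matrix (Fin n) (Fin n) 𝕜)
    (x : Fin n → 𝕜) : Matrix.toEuclideanCLM (𝕜 := 𝕜) C ((WithLp.equiv 2 (Fin n → 𝕜)).symm x) =
      (WithLp.equiv 2 (Fin n → 𝕜)).symm (C *ᵥ x) := rfl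

variable {n : ℕ}

private lemma stmt10_mulVec_map_re (C : Matrix (Fin n) (Fin n) ℝ) (z : Fin n → ℂ) (i : Fin n) :
    (((C.map ((↑) : ℝ → ℂ)) *ᵥ z) i).re = (C *ᵥ fun j => (z j).re) i := by
  simp [Matrix.mulVec, dotProduct, Complex.re_sum]

private lemma stmt10_mulVec_map_im (C : Matrix (Fin n) (Fin n) ℝ) (z : Fin n → ℂ) (i : Fin n) :
    (((C.map ((↑) : ℝ → ℂ)) *ᵥ z) i).im = (C *ᵥ fun j => (z j).im) i := by
  simp [Matrix.mulVec, dotProduct, Complex.im_sum]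

private lemma stmt10_real_sq_bound (C : Matrix (Fin n) (Fin n) ℝ) (a : Fin n → ℝ) :
    ∑ i, ((C *ᵥ a) i)^2 ≤ ‖Matrix.toEuclideanCLM (𝕜 := ℝ) C‖^2 * ∑ i, (a i)^2 := by
  have h := (Matrix.toEuclideanCLM (𝕜 := ℝ) C).le_opNorm ((WithLp.equiv 2 _).symm a)
  rw [stmt10_clm_equiv] at h
  have h2 : ∀ (u : Fin n → ℝ), ‖(WithLp.equiv 2 (Fin n → ℝ)).symm u‖^2 = ∑ i, (u i)^2 := by
    intro u
    rw [EuclideanSpace.norm_eq]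
    rw [Real.sq_sqrt (by positivity)]
    simp [sq_abs]
  have h3 : 0 ≤ ‖(WithLp.equiv 2 (Fin n → ℝ)).symm (C *ᵥ a)‖ := norm_nonneg _
  nlinarith [h2 (C *ᵥ a), h2 a, norm_nonneg ((WithLp.equiv 2 (Fin n → ℝ)).symm a),
    (Matrix.toEuclideanCLM (𝕜 := ℝ) C).opNorm_nonneg]

private lemma stmt10_opNorm_map_le (C : Matrix (Fin n) (Fin n) ℝ) :
    ‖Matrix.toEuclideanCLM (𝕜 := ℂ) (C.map ((↑) : ℝ → ℂ))‖ ≤ ‖Matrix.toEuclideanCLM (𝕜 := ℝ) C‖ := by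
  refine ContinuousLinearMap.opNorm_le_bound _ (norm_nonneg _) fun z => ?_
  set w : Fin n → ℂ := WithLp.equiv 2 _ z with hw
  have hz : z = (WithLp.equiv 2 (Fin n → ℂ)).symm w := rfl
  rw [hz, stmt10_clm_equiv]
  have hsq : ∀ (u : Fin n → ℂ), ‖(WithLp.equiv 2 (Fin n → ℂ)).symm u‖^2 = ∑ i, Complex.normSq (u i) := by
    intro u
    rw [EuclideanSpace.norm_eq, Real.sq_sqrt (by positivity)]
    simp [Complex.sq_norm]
  have key : ‖(WithLp.equiv 2 (Fin n → ℂ)).symm ((C.map ((↑) : ℝ → ℂ)) *ᵥ w)‖^2 ≤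
      (‖Matrix.toEuclideanCLM (𝕜 := ℝ) C‖ * ‖(WithLp.equiv 2 (Fin n → ℂ)).symm w‖)^2 := by
    rw [hsq, mul_pow, hsq]
    have e1 : ∀ i, Complex.normSq (((C.map ((↑) : ℝ → ℂ)) *ᵥ w) i)
        = ((C *ᵥ fun j => (w j).re) i)^2 + ((C *ᵥ fun j => (w j).im) i)^2 := by
      intro i
      rw [Complex.normSq_apply, stmt10_mulVec_map_re, stmt10_mulVec_map_im, sq, sq]
    simp only [e1, Complex.normSq_apply, ← sq]
    rw [Finset.sum_add_distrib, Finset.sum_add_distrib, mul_add]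
    exact add_le_add (stmt10_real_sq_bound C _) (stmt10_real_sq_bound C _)
  have h1 : (0:ℝ) ≤ ‖Matrix.toEuclideanCLM (𝕜 := ℝ) C‖ * ‖(WithLp.equiv 2 (Fin n → ℂ)).symm w‖ :=
    mul_nonneg (norm_nonneg _) (norm_nonneg _)
  calc ‖(WithLp.equiv 2 (Fin n → ℂ)).symm ((C.map ((↑) : ℝ → ℂ)) *ᵥ w)‖
      = Real.sqrt (‖(WithLp.equiv 2 (Fin n → ℂ)).symm ((C.map ((↑) : ℝ → ℂ)) *ᵥ w)‖^2) :=
        (Real.sqrt_sq (norm_nonneg _)).symm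
    _ ≤ Real.sqrt ((‖Matrix.toEuclideanCLM (𝕜 := ℝ) C‖ * ‖(WithLp.equiv 2 (Fin n → ℂ)).symm w‖)^2) :=
        Real.sqrt_le_sqrt key
    _ = ‖Matrix.toEuclideanCLM (𝕜 := ℝ) C‖ * ‖(WithLp.equiv 2 (Fin n → ℂ)).symm w‖ := Real.sqrt_sq h1
    _ = ‖Matrix.toEuclideanCLM (𝕜 := ℝ) C‖ * ‖z‖ := rfl

private lemma stmt10_dot_bound (C : Matrix (Fin n) (Fin n) ℝ) (x y : Fin n → ℂ) :
    ‖star x ⬝ᵥ ((C.map ((↑) : ℝ → ℂ)) *ᵥ y)‖ ≤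
      ‖Matrix.toEuclideanCLM (𝕜 := ℝ) C‖ *
        (‖(WithLp.equiv 2 (Fin n → ℂ)).symm x‖ * ‖(WithLp.equiv 2 (Fin n → ℂ)).symm y‖) := by
  have h1 : star x ⬝ᵥ ((C.map ((↑) : ℝ → ℂ)) *ᵥ y) =
      inner ℂ ((WithLp.equiv 2 (Fin n → ℂ)).symm x)
        (Matrix.toEuclideanCLM (𝕜 := ℂ) (C.map ((↑) : ℝ → ℂ)) ((WithLp.equiv 2 (Fin n → ℂ)).symm y)) := by
    rw [stmt10_clm_equiv]; exact dotProduct_comm _ _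
  rw [h1]
  calc ‖(inner ℂ ((WithLp.equiv 2 (Fin n → ℂ)).symm x)
        (Matrix.toEuclideanCLM (𝕜 := ℂ) (C.map ((↑) : ℝ → ℂ)) ((WithLp.equiv 2 (Fin n → ℂ)).symm y)) : ℂ)‖
      ≤ ‖(WithLp.equiv 2 (Fin n → ℂ)).symm x‖ *
          ‖Matrix.toEuclideanCLM (𝕜 := ℂ) (C.map ((↑) : ℝ → ℂ)) ((WithLp.equiv 2 (Fin n → ℂ)).symm y)‖ :=
        norm_inner_le_norm _ _
    _ ≤ ‖(WithLp.equiv 2 (Fin n → ℂ)).symm x‖ *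
          (‖Matrix.toEuclideanCLM (𝕜 := ℂ) (C.map ((↑) : ℝ → ℂ))‖ * ‖(WithLp.equiv 2 (Fin n → ℂ)).symm y‖) :=
        mul_le_mul_of_nonneg_left (ContinuousLinearMap.le_opNorm _ _) (norm_nonneg _)
    _ ≤ ‖(WithLp.equiv 2 (Fin n → ℂ)).symm x‖ *
          (‖Matrix.toEuclideanCLM (𝕜 := ℝ) C‖ * ‖(WithLp.equiv 2 (Fin n → ℂ)).symm y‖) := by
        apply mul_le_mul_of_nonneg_left _ (norm_nonneg _)
        exact mul_le_mul_of_nonneg_right (stmt10_opNorm_map_le C) (norm_nonneg _)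
    _ = ‖Matrix.toEuclideanCLM (𝕜 := ℝ) C‖ *
        (‖(WithLp.equiv 2 (Fin n → ℂ)).symm x‖ * ‖(WithLp.equiv 2 (Fin n → ℂ)).symm y‖) := by ring

private lemma stmt10_exists_eigvec {m : Type*} [Fintype m] [DecidableEq m] (G : Matrix m m ℂ) (z : ℂ)
    (hz : z ∈ spectrum ℂ G) : ∃ v : m → ℂ, v ≠ 0 ∧ G *ᵥ v = z • v := by
  have h1 : z ∈ spectrum ℂ (Matrix.toLinAlgEquiv' G) := by
    rwa [AlgEquiv.spectrum_eq]
  have h2 : Module.End.HasEigenvalue (Matrix.toLinAlgEquiv' G) z :=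
    Module.End.hasEigenvalue_iff_mem_spectrum.mpr h1
  obtain ⟨v, hv⟩ := h2.exists_hasEigenvector
  refine ⟨v, hv.2, ?_⟩
  have := hv.apply_eq_smul
  rwa [Matrix.toLinAlgEquiv'_apply] at this

private lemma stmt10_assembly (At Bt : Matrix (Fin n) (Fin n) ℝ) (τ : ℝ) (hτ : 0 < τ) (z : ℂ)
    (v : (Fin n ⊕ Fin n) → ℂ) (hv0 : v ≠ 0)
    (hv : (Matrix.fromBlocks 0 (τ • At) (-(τ • Bt)) 0).map ((↑) : ℝ → ℂ) *ᵥ v = z • v) :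
    ‖z‖ ≤ (τ / 2) *
      (‖Matrix.toEuclideanCLM (𝕜 := ℝ) At‖ + ‖Matrix.toEuclideanCLM (𝕜 := ℝ) Bt‖) := by
  set x : Fin n → ℂ := fun i => v (Sum.inl i) with hx
  set y : Fin n → ℂ := fun i => v (Sum.inr i) with hy
  have hvel : v = Sum.elim x y := by funext i; cases i <;> rfl
  set Ac := At.map ((↑) : ℝ → ℂ) with hAc
  set Bc := Bt.map ((↑) : ℝ → ℂ) with hBc
  have hmapF : (Matrix.fromBlocks 0 (τ • At) (-(τ • Bt)) 0).map ((↑) : ℝ → ℂ) =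
      Matrix.fromBlocks 0 ((τ:ℂ) • Ac) (-((τ:ℂ) • Bc)) 0 := by
    ext i j
    cases i <;> cases j <;> simp [hAc, hBc, Matrix.map_apply]
  rw [hmapF, hvel, Matrix.fromBlocks_mulVec] at hv
  have eq1 : ((τ:ℂ) • Ac) *ᵥ y = z • x := by
    funext i
    have := congrFun hv (Sum.inl i)
    simpa [Matrix.zero_mulVec] using this
  have eq2 : -(((τ:ℂ) • Bc) *ᵥ x) = z • y := by
    funext i
    have := congrFun hv (Sum.inr i)
    simpa [Matrix.zero_mulVec, Matrix.neg_mulVec] using this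
  set P := star x ⬝ᵥ (Ac *ᵥ y) with hP
  set Q := star y ⬝ᵥ (Bc *ᵥ x) with hQ
  set nx := ‖(WithLp.equiv 2 (Fin n → ℂ)).symm x‖ with hnx
  set ny := ‖(WithLp.equiv 2 (Fin n → ℂ)).symm y‖ with hny
  have hsq : ∀ (u : Fin n → ℂ), ‖(WithLp.equiv 2 (Fin n → ℂ)).symm u‖^2 = ∑ i, Complex.normSq (u i) := by
    intro u
    rw [EuclideanSpace.norm_eq, Real.sq_sqrt (by positivity)]
    simp [Complex.sq_norm]
  have hdot : ∀ u : Fin n → ℂ, star u ⬝ᵥ u = ((‖(WithLp.equiv 2 (Fin n → ℂ)).symm u‖^2 : ℝ) : ℂ) := by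
    intro u
    rw [hsq]
    push_cast
    simp [dotProduct, Complex.normSq_eq_conj_mul_self]
  have heq1 : (τ:ℂ) * P = z * ((nx^2 : ℝ) : ℂ) := by
    have := congrArg (fun w => star x ⬝ᵥ w) eq1
    simpa [Matrix.smul_mulVec, dotProduct_smul, smul_eq_mul, hdot x, hP, hnx] using this
  have heq2 : -((τ:ℂ) * Q) = z * ((ny^2 : ℝ) : ℂ) := by
    have := congrArg (fun w => star y ⬝ᵥ w) eq2
    simpa [Matrix.smul_mulVec, dotProduct_smul, dotProduct_neg, smul_eq_mul,
      hdot y, hQ, hny] using this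
  have hmain : z * (((nx^2 + ny^2 : ℝ)) : ℂ) = (τ:ℂ) * (P - Q) := by
    push_cast at heq1 heq2 ⊢
    linear_combination -heq1 - heq2
  set Ka := ‖Matrix.toEuclideanCLM (𝕜 := ℝ) At‖ with hKa
  set Kb := ‖Matrix.toEuclideanCLM (𝕜 := ℝ) Bt‖ with hKb
  have habs : ‖z‖ * (nx^2 + ny^2) ≤ τ * (Ka * (nx * ny) + Kb * (ny * nx)) := by
    have h1 : ‖z * (((nx^2 + ny^2 : ℝ)) : ℂ)‖ = ‖z‖ * (nx^2 + ny^2) := by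
      rw [norm_mul, Complex.norm_of_nonneg (by positivity)]
    have h2 : ‖(τ:ℂ) * (P - Q)‖ ≤ τ * (Ka * (nx * ny) + Kb * (ny * nx)) := by
      rw [norm_mul, Complex.norm_of_nonneg hτ.le]
      apply mul_le_mul_of_nonneg_left _ hτ.le
      calc ‖P - Q‖ ≤ ‖P‖ + ‖Q‖ := by
            simpa [sub_eq_add_neg] using norm_add_le P (-Q)
        _ ≤ Ka * (nx * ny) + Kb * (ny * nx) :=
            add_le_add (stmt10_dot_bound At x y) (stmt10_dot_bound Bt y x)
    rw [← h1, hmain]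
    exact h2
  have hpos : 0 < nx^2 + ny^2 := by
    rcases Function.ne_iff.mp hv0 with ⟨i, hi⟩
    have hterm : ∀ (u : Fin n → ℂ) (j : Fin n), Complex.normSq (u j) ≤
        ‖(WithLp.equiv 2 (Fin n → ℂ)).symm u‖^2 := by
      intro u j
      rw [hsq]
      exact Finset.single_le_sum (fun k _ => Complex.normSq_nonneg (u k)) (Finset.mem_univ j)
    cases i with
    | inl j =>
      have : 0 < Complex.normSq (x j) := by
        rw [Complex.normSq_pos]; exact hi
      have h2 := hterm x j
      nlinarith [sq_nonneg ny]
    | inr j =>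
      have : 0 < Complex.normSq (y j) := by
        rw [Complex.normSq_pos]; exact hi
      have h2 := hterm y j
      nlinarith [sq_nonneg nx]
  have hKa0 : 0 ≤ Ka := norm_nonneg _
  have hKb0 : 0 ≤ Kb := norm_nonneg _
  nlinarith [sq_nonneg (nx - ny),
    mul_nonneg (mul_nonneg hτ.le (add_nonneg hKa0 hKb0)) (sq_nonneg (nx - ny))]

end Stmt10Aux

/-- Eigenvalue bound for `E_d = [[M,0],[0,M]]⁻¹[[0, τA],[−τB, 0]]`:
every eigenvalue `λ` satisfies
`|λ| ≤ (τ/2)(‖M^{-1/2}AM^{-1/2}‖ + ‖M^{-1/2}BM^{-1/2}‖)`. -/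
theorem stmt_10 {n : ℕ} (A B M : Matrix (Fin n) (Fin n) ℝ)
    (hM : M.PosDef) (hA : A.PosSemidef) (hB : B.PosSemidef)
    (τ : ℝ) (hτ : 0 < τ) :
    ∀ z ∈ spectrum ℂ
      (((Matrix.fromBlocks M 0 0 M)⁻¹ *
        Matrix.fromBlocks 0 (τ • A) (-(τ • B)) 0).map ((↑) : ℝ → ℂ)),
      ‖z‖ ≤ (τ / 2) *
        (‖Matrix.toEuclideanCLM (𝕜 := ℝ)
            (hM.posSemidef.sqrt⁻¹ * A * hM.posSemidef.sqrt⁻¹)‖ +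
         ‖Matrix.toEuclideanCLM (𝕜 := ℝ)
            (hM.posSemidef.sqrt⁻¹ * B * hM.posSemidef.sqrt⁻¹)‖) := by
  intro z hz
  set R := hM.posSemidef.sqrt with hRdef
  have hRR : R * R = M := stmt10_sqrt_mul_self hM.posSemidef
  have hdetM : IsUnit M.det := isUnit_iff_ne_zero.mpr (ne_of_gt hM.det_pos)
  have hdetR : IsUnit R.det := by
    rw [← hRR, det_mul] at hdetM
    exact isUnit_iff_ne_zero.mpr fun h => by simp [h] at hdetM
  have hRinv : R * R⁻¹ = 1 := mul_nonsing_inv R hdetR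
  have hRinv' : R⁻¹ * R = 1 := nonsing_inv_mul R hdetR
  have hMinv : M⁻¹ = R⁻¹ * R⁻¹ := by rw [← hRR, Matrix.mul_inv_rev]
  have hRM : R * M⁻¹ = R⁻¹ := by rw [hMinv, ← mul_assoc, hRinv, one_mul]
  have hkey : ∀ X : Matrix (Fin n) (Fin n) ℝ, R * (M⁻¹ * X) = R⁻¹ * X := fun X => by
    rw [← Matrix.mul_assoc, hRM]
  have hblk : (fromBlocks M 0 0 M)⁻¹ = fromBlocks M⁻¹ 0 0 M⁻¹ := by
    apply inv_eq_right_inv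
    rw [fromBlocks_multiply]
    simp [mul_nonsing_inv M hdetM, fromBlocks_one]
  set S : Matrix (Fin n ⊕ Fin n) (Fin n ⊕ Fin n) ℝ := fromBlocks R 0 0 R with hS
  set T : Matrix (Fin n ⊕ Fin n) (Fin n ⊕ Fin n) ℝ := fromBlocks R⁻¹ 0 0 R⁻¹ with hT
  have hST : S * T = 1 := by rw [hS, hT, fromBlocks_multiply]; simp [hRinv, fromBlocks_one]
  have hTS : T * S = 1 := by rw [hS, hT, fromBlocks_multiply]; simp [hRinv', fromBlocks_one]
  set E : Matrix (Fin n ⊕ Fin n) (Fin n ⊕ Fin n) ℝ :=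
    (fromBlocks M 0 0 M)⁻¹ * fromBlocks 0 (τ • A) (-(τ • B)) 0 with hE
  set F : Matrix (Fin n ⊕ Fin n) (Fin n ⊕ Fin n) ℝ :=
    fromBlocks 0 (τ • (R⁻¹ * A * R⁻¹)) (-(τ • (R⁻¹ * B * R⁻¹))) 0 with hF
  have hconj : S * E * T = F := by
    rw [hE, hblk, hS, hT, hF, fromBlocks_multiply, fromBlocks_multiply, fromBlocks_multiply]
    simp only [Matrix.mul_zero, Matrix.zero_mul, Matrix.mul_neg, Matrix.neg_mul, add_zero,
      zero_add, neg_zero, smul_zero, Matrix.mul_smul, Matrix.smul_mul, Matrix.mul_assoc, hkey]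
  have hETFS : E = T * F * S := by
    rw [← hconj]
    calc E = (T * S) * E * (T * S) := by rw [hTS]; simp
    _ = T * (S * E * T) * S := by noncomm_ring
  let φ : ℝ →+* ℂ := Complex.ofRealHom
  have hu1 : S.map ((↑) : ℝ → ℂ) * T.map ((↑) : ℝ → ℂ) = 1 := by
    rw [show ((↑) : ℝ → ℂ) = ⇑φ from rfl, ← Matrix.map_mul, hST,
      Matrix.map_one φ φ.map_zero φ.map_one]
  have hu2 : T.map ((↑) : ℝ → ℂ) * S.map ((↑) : ℝ → ℂ) = 1 := by
    rw [show ((↑) : ℝ → ℂ) = ⇑φ from rfl, ← Matrix.map_mul, hTS,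
      Matrix.map_one φ φ.map_zero φ.map_one]
  set u : (Matrix (Fin n ⊕ Fin n) (Fin n ⊕ Fin n) ℂ)ˣ :=
    ⟨S.map ((↑) : ℝ → ℂ), T.map ((↑) : ℝ → ℂ), hu1, hu2⟩ with hu
  have hmap : E.map ((↑) : ℝ → ℂ) =
      (↑u⁻¹ : Matrix (Fin n ⊕ Fin n) (Fin n ⊕ Fin n) ℂ) * (F.map ((↑) : ℝ → ℂ)) *
        (↑u : Matrix (Fin n ⊕ Fin n) (Fin n ⊕ Fin n) ℂ) := by
    show E.map ((↑) : ℝ → ℂ) = T.map ((↑) : ℝ → ℂ) * F.map ((↑) : ℝ → ℂ) * S.map ((↑) : ℝ → ℂ)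
    rw [hETFS, show ((↑) : ℝ → ℂ) = ⇑φ from rfl, Matrix.map_mul, Matrix.map_mul]
  have hzF : z ∈ spectrum ℂ (F.map ((↑) : ℝ → ℂ)) := by
    rw [← spectrum.units_conjugate' (u := u), ← hmap]
    exact hz
  obtain ⟨v, hv0, hv⟩ := stmt10_exists_eigvec (F.map ((↑) : ℝ → ℂ)) z hzF
  exact stmt10_assembly (R⁻¹ * A * R⁻¹) (R⁻¹ * B * R⁻¹) τ hτ z v hv0 hv
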